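/- Let R = K[x_1,...,x_n] over a field K of characteristic p > 0, with a lexicographic monomial order <, and let g ∈ R with leading monomial in_<(g) = x_1 x_2 ··· x_n (the product of all variables, with leading coefficient 1). Then Tr(g^{p−1}) = 1, where Tr is the trace map; consequently φ(h) := Tr(g^{p−1} h) defines a Frobenius splitting of R. -/

import Mathlib

open MvPolynomial

-- The trace map on `K[x_1,…,x_n]` for a perfect field `K` of characteristic `p`.
open Classical in
noncomputable def trMap (p : ℕ) (K : Type*) [Field K] [ExpChar K p] [PerfectRing K p]
    {n : ℕ} (f : MvPolynomial (Fin n) K) : MvPolynomial (Fin n) K :=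
  ∑ m ∈ f.support,
    if ∀ i, p ∣ (m i + 1) then
      MvPolynomial.monomial
        (Finsupp.mapRange (fun e => (e + 1) / p - 1)
          (Nat.sub_eq_zero_of_le (Nat.div_le_self 1 p)) m)
        ((frobeniusEquiv K p).symm (MvPolynomial.coeff m f))
    else 0

/-- The lexicographic order on monomials induced by a strict ordering `vord` of the
variables (`vord w v` meaning `w` is more significant than `v`): `m ≤ m'` iff
`m = m'` or, at the most significant variable where they differ, `m` has the
smaller exponent. -/
def lexLEVar {n : ℕ} (vord : Fin n → Fin n → Prop) (m m' : Fin n →₀ ℕ) : Prop :=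
  m = m' ∨ ∃ v, m v < m' v ∧ ∀ w, vord w v → m w = m' w

/-- `m` is the leading monomial of `f` with respect to `le`. -/
def IsLeadMono {K : Type*} [Field K] {n : ℕ}
    (le : (Fin n →₀ ℕ) → (Fin n →₀ ℕ) → Prop)
    (f : MvPolynomial (Fin n) K) (m : Fin n →₀ ℕ) : Prop :=
  m ∈ f.support ∧ ∀ m' ∈ f.support, le m' m

section Aux

variable (p : ℕ) (K : Type*) [Field K] [ExpChar K p] [PerfectRing K p] {n : ℕ}

/-- The constant exponent `(p-1, …, p-1)`. -/
noncomputable def cMono (p n : ℕ) : Fin n →₀ ℕ :=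
  Finsupp.equivFunOnFinite.symm fun _ => p - 1

lemma cMono_apply (i : Fin n) : cMono p n i = p - 1 := rfl

lemma coeff_trMap (hp : 0 < p) (f : MvPolynomial (Fin n) K) (m' : Fin n →₀ ℕ) :
    MvPolynomial.coeff m' (trMap p K f) =
      (frobeniusEquiv K p).symm (MvPolynomial.coeff (p • m' + cMono p n) f) := by
  classical
  set M : Fin n →₀ ℕ := p • m' + cMono p n with hMdef
  have hM : ∀ i, M i = p * m' i + (p - 1) := by
    intro i
    simp [hMdef, cMono, mul_comm]
  unfold trMap
  rw [coeff_sum]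
  have hterm : ∀ m ∈ f.support,
      MvPolynomial.coeff m' (if ∀ i, p ∣ (m i + 1) then
        MvPolynomial.monomial
          (Finsupp.mapRange (fun e => (e + 1) / p - 1)
            (Nat.sub_eq_zero_of_le (Nat.div_le_self 1 p)) m)
          ((frobeniusEquiv K p).symm (MvPolynomial.coeff m f))
        else 0) =
      if m = M then (frobeniusEquiv K p).symm (MvPolynomial.coeff m f) else 0 := by
    intro m _
    by_cases hmM : m = M
    · subst hmM
      rw [if_pos, if_pos rfl, coeff_monomial, if_pos]
      · ext i
        rw [Finsupp.mapRange_apply, hM i]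
        have h1 : p * m' i + (p - 1) + 1 = p * (m' i + 1) := by
          have hmul : p * (m' i + 1) = p * m' i + p := by ring
          omega
        rw [h1, Nat.mul_div_cancel_left _ hp]
        omega
      · intro i
        rw [hM i]
        refine ⟨m' i + 1, ?_⟩
        have hmul : p * (m' i + 1) = p * m' i + p := by ring
        omega
    · split_ifs with hcond
      · rw [coeff_monomial, if_neg]
        intro heq
        apply hmM
        ext i
        have h1 := hcond i
        obtain ⟨k, hk⟩ := h1
        have hk1 : 1 ≤ k := by
          rcases Nat.eq_zero_or_pos k with h0 | h0
          · subst h0; omega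
          · exact h0
        have h2 : (m i + 1) / p - 1 = m' i := by
          rw [← heq, Finsupp.mapRange_apply]
        rw [hk, Nat.mul_div_cancel_left _ hp] at h2
        rw [hM i]
        have hkeq : k = m' i + 1 := by omega
        subst hkeq
        have hmul : p * (m' i + 1) = p * m' i + p := by ring
        omega
      · simp
  rw [Finset.sum_congr rfl hterm, Finset.sum_ite_eq' f.support M
    (fun m => (frobeniusEquiv K p).symm (MvPolynomial.coeff m f))]
  split_ifs with h
  · rfl
  · rw [MvPolynomial.notMem_support_iff.mp h, map_zero]

lemma trMap_add (hp : 0 < p) (f f' : MvPolynomial (Fin n) K) :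
    trMap p K (f + f') = trMap p K f + trMap p K f' := by
  ext m'
  rw [coeff_add, coeff_trMap p K hp, coeff_trMap p K hp, coeff_trMap p K hp, coeff_add,
    map_add]

lemma trMap_monomial_pow_mul (hp : 0 < p) (s : Fin n →₀ ℕ) (c : K)
    (f : MvPolynomial (Fin n) K) :
    trMap p K ((MvPolynomial.monomial s c) ^ p * f) =
      MvPolynomial.monomial s c * trMap p K f := by
  ext m'
  rw [coeff_trMap p K hp, monomial_pow, coeff_monomial_mul', coeff_monomial_mul']
  by_cases hs : s ≤ m'
  · have hps : p • s ≤ p • m' + cMono p n := by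
      intro i
      have := Finsupp.le_def.mp hs i
      simp only [Finsupp.smul_apply, smul_eq_mul, Finsupp.add_apply, cMono_apply]
      exact le_trans (Nat.mul_le_mul_left p this) (Nat.le_add_right _ _)
    rw [if_pos hps, if_pos hs]
    have hsub : p • m' + cMono p n - p • s = p • (m' - s) + cMono p n := by
      ext i
      have h1 := Finsupp.le_def.mp hs i
      have h2 : p * s i ≤ p * m' i := Nat.mul_le_mul_left p h1
      have h3 : p * (m' i - s i) = p * m' i - p * s i := Nat.mul_sub ..
      simp only [Finsupp.tsub_apply, Finsupp.add_apply, Finsupp.smul_apply, smul_eq_mul,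
        cMono_apply, h3]
      omega
    rw [hsub, map_mul, coeff_trMap p K hp]
    congr 1
    have : c ^ p = frobeniusEquiv K p c := rfl
    rw [this, RingEquiv.symm_apply_apply]
  · have hps : ¬ (p • s ≤ p • m' + cMono p n) := by
      intro hcon
      apply hs
      intro i
      by_contra hi
      push_neg at hi
      have := hcon i
      simp only [Finsupp.smul_apply, smul_eq_mul, Finsupp.add_apply, cMono_apply] at this
      have h1 : p * (m' i + 1) ≤ p * s i := Nat.mul_le_mul_left p hi
      have hmul : p * (m' i + 1) = p * m' i + p := by ring
      omega
    rw [if_neg hps, if_neg hs, map_zero]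

lemma trMap_pow_mul (hp : 0 < p) [CharP K p] (hpp : p.Prime)
    (a f : MvPolynomial (Fin n) K) :
    trMap p K (a ^ p * f) = a * trMap p K f := by
  haveI : Fact p.Prime := ⟨hpp⟩
  induction a using MvPolynomial.induction_on' with
  | monomial s c => exact trMap_monomial_pow_mul p K hp s c f
  | add q r hq hr =>
      rw [add_pow_char, add_mul, trMap_add p K hp, hq, hr, add_mul]

lemma pow_support_witness {K : Type*} [Field K] {n : ℕ}
    (vord : Fin n → Fin n → Prop) (hvord : IsStrictTotalOrder (Fin n) vord)
    (r : MvPolynomial (Fin n) K)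
    (hr : ∀ m ∈ r.support, ∃ v, m v = 0 ∧ ∀ w, vord w v → m w = 1) :
    ∀ j, 1 ≤ j → ∀ M ∈ (r ^ j).support, ∃ v, M v + 1 ≤ j ∧ ∀ w, vord w v → M w = j := by
  classical
  haveI := hvord
  intro j hj
  induction j, hj using Nat.le_induction with
  | base =>
      intro M hM
      rw [pow_one] at hM
      obtain ⟨v, hv0, hv1⟩ := hr M hM
      exact ⟨v, by omega, hv1⟩
  | succ j hj ih =>
      intro M hM
      rw [pow_succ] at hM
      have := MvPolynomial.support_mul _ _ hM
      rw [Finset.mem_add] at this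
      obtain ⟨a, ha, b, hb, hab⟩ := this
      obtain ⟨va, hva, hva'⟩ := ih a ha
      obtain ⟨vb, hvb, hvb'⟩ := hr b hb
      rcases trichotomous_of vord va vb with h | h | h
      · -- va more significant than vb
        refine ⟨va, ?_, ?_⟩
        · have hbva : b va = 1 := hvb' va h
          have : M va = a va + b va := by rw [← hab]; rfl
          omega
        · intro w hw
          have h1 : a w = j := hva' w hw
          have h2 : b w = 1 := hvb' w (Trans.trans hw h)
          have : M w = a w + b w := by rw [← hab]; rfl
          omega
      · subst h
        refine ⟨va, ?_, ?_⟩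
        · have : M va = a va + b va := by rw [← hab]; rfl
          omega
        · intro w hw
          have h1 : a w = j := hva' w hw
          have h2 : b w = 1 := hvb' w hw
          have : M w = a w + b w := by rw [← hab]; rfl
          omega
      · -- vb more significant than va
        refine ⟨vb, ?_, ?_⟩
        · have hava : a vb = j := hva' vb h
          have : M vb = a vb + b vb := by rw [← hab]; rfl
          omega
        · intro w hw
          have h1 : a w = j := hva' w (Trans.trans hw h)
          have h2 : b w = 1 := hvb' w hw
          have : M w = a w + b w := by rw [← hab]; rfl
          omega

end Aux

/-- Let `g ∈ K[x_1,…,x_n]` (char `p > 0`) have leading monomial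
`x_1⋯x_n` with leading coefficient `1`, with respect to a lexicographic monomial
order.  Then `Tr(g^{p-1}) = 1`, and consequently `φ(h) := Tr(g^{p-1}·h)` is a
Frobenius splitting of `K[x_1,…,x_n]`. -/
theorem stmt13 (p : ℕ) (hp : p.Prime) (K : Type*) [Field K] [CharP K p]
    [ExpChar K p] [PerfectRing K p] {n : ℕ}
    (vord : Fin n → Fin n → Prop) (hvord : IsStrictTotalOrder (Fin n) vord)
    (g : MvPolynomial (Fin n) K)
    (hlead : IsLeadMono (lexLEVar vord) g
      (Finsupp.equivFunOnFinite.symm fun _ => (1 : ℕ)))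
    (hcoeff : MvPolynomial.coeff (Finsupp.equivFunOnFinite.symm fun _ => (1 : ℕ)) g = 1) :
    trMap p K (g ^ (p - 1)) = 1 ∧
    (∀ a b : MvPolynomial (Fin n) K,
      trMap p K (g ^ (p - 1) * (a + b)) =
        trMap p K (g ^ (p - 1) * a) + trMap p K (g ^ (p - 1) * b)) ∧
    (∀ a b : MvPolynomial (Fin n) K,
      trMap p K (g ^ (p - 1) * (a ^ p * b)) = a * trMap p K (g ^ (p - 1) * b)) ∧
    trMap p K (g ^ (p - 1) * 1) = 1 := by
  classical
  have hp0 : 0 < p := hp.pos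
  have hp2 : 2 ≤ p := hp.two_le
  set one : Fin n →₀ ℕ := Finsupp.equivFunOnFinite.symm fun _ => (1 : ℕ) with honedef
  have hone : ∀ i, one i = 1 := fun _ => rfl
  set L : MvPolynomial (Fin n) K := MvPolynomial.monomial one 1 with hLdef
  set r : MvPolynomial (Fin n) K := g - L with hrdef
  have hg : g = L + r := by rw [hrdef]; ring
  -- support of r consists of strictly smaller monomials
  have hr : ∀ m ∈ r.support, ∃ v, m v = 0 ∧ ∀ w, vord w v → m w = 1 := by
    intro m hm
    have hmne : m ≠ one := by
      intro h
      subst h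
      rw [MvPolynomial.mem_support_iff, hrdef, coeff_sub, hcoeff, hLdef,
        coeff_monomial, if_pos rfl] at hm
      simp at hm
    have hmg : m ∈ g.support := by
      rw [MvPolynomial.mem_support_iff]
      rw [MvPolynomial.mem_support_iff, hrdef, coeff_sub, hLdef, coeff_monomial,
        if_neg (fun h => hmne h.symm), sub_zero] at hm
      exact hm
    rcases hlead.2 m hmg with h | ⟨v, hv, hv'⟩
    · exact absurd h hmne
    · refine ⟨v, by have := hone v; omega, fun w hw => by rw [hv' w hw]; exact hone w⟩
  -- cMono equals (p-1) • one
  have hcone : (p - 1) • one = cMono p n := by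
    ext i
    simp [cMono, hone, Finsupp.smul_apply]
  -- key coefficient computation
  have hkey : ∀ M : Fin n →₀ ℕ, (∀ i, p ∣ M i + 1) →
      MvPolynomial.coeff M (g ^ (p - 1)) = if M = cMono p n then 1 else 0 := by
    intro M hMdvd
    rw [hg, add_pow]
    rw [coeff_sum]
    have hterm : ∀ k ∈ Finset.range (p - 1 + 1),
        MvPolynomial.coeff M (L ^ k * r ^ (p - 1 - k) * ((p-1).choose k : MvPolynomial (Fin n) K)) =
        if k = p - 1 then (if M = cMono p n then 1 else 0) else 0 := by
      intro k hk
      rw [Finset.mem_range] at hk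
      rw [← map_natCast (C : K →+* MvPolynomial (Fin n) K), mul_comm, coeff_C_mul]
      by_cases hkp : k = p - 1
      · subst hkp
        rw [if_pos rfl, Nat.sub_self, pow_zero, mul_one, hLdef, monomial_pow, one_pow,
          hcone, coeff_monomial, Nat.choose_self]
        simp only [Nat.cast_one, one_mul]
        by_cases h : M = cMono p n
        · rw [if_pos h.symm, if_pos h]
        · rw [if_neg (fun hc => h hc.symm), if_neg h]
      · rw [if_neg hkp]
        have hj1 : 1 ≤ p - 1 - k := by omega
        have : MvPolynomial.coeff M (L ^ k * r ^ (p - 1 - k)) = 0 := by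
          rw [hLdef, monomial_pow, one_pow, coeff_monomial_mul']
          split_ifs with hle
          · rw [one_mul]
            rw [← MvPolynomial.notMem_support_iff.mp]
            intro hmem
            obtain ⟨v, hv, _⟩ :=
              pow_support_witness vord hvord r hr (p - 1 - k) hj1 _ hmem
            have h1 : (M - k • one) v = M v - k := by
              simp [Finsupp.tsub_apply, Finsupp.smul_apply, hone]
            have h2 : k • one ≤ M := hle
            have h3 := Finsupp.le_def.mp h2 v
            simp only [Finsupp.smul_apply, smul_eq_mul, hone, mul_one] at h3
            rw [h1] at hv
            -- M v ≤ p - 2, contradiction with p ∣ M v + 1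
            have h4 : M v + 1 ≤ p - 1 := by omega
            have h5 := Nat.le_of_dvd (by omega) (hMdvd v)
            omega
          · rfl
        rw [this, mul_zero]
    rw [Finset.sum_congr rfl hterm]
    rw [Finset.sum_ite_eq' (Finset.range (p - 1 + 1)) (p - 1)
      (fun _ => if M = cMono p n then (1 : K) else 0)]
    rw [if_pos (Finset.self_mem_range_succ (p - 1))]
  -- main result
  have hmain : trMap p K (g ^ (p - 1)) = 1 := by
    ext m
    rw [coeff_trMap p K hp0, hkey]
    · have hiff : (p • m + cMono p n = cMono p n) ↔ m = 0 := by
        constructor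
        · intro h
          ext i
          have := DFunLike.congr_fun h i
          simp only [Finsupp.add_apply, Finsupp.smul_apply, smul_eq_mul, cMono_apply] at this
          simp only [Finsupp.coe_zero, Pi.zero_apply]
          have hz : p * m i = 0 := by omega
          rcases Nat.mul_eq_zero.mp hz with h' | h'
          · omega
          · exact h'
        · intro h; rw [h, smul_zero, zero_add]
      by_cases hm : m = 0
      · rw [if_pos (hiff.mpr hm), map_one, hm, coeff_one, if_pos rfl]
      · rw [if_neg (fun h => hm (hiff.mp h)), map_zero, coeff_one,
          if_neg (fun h => hm h.symm)]
    · intro i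
      simp only [Finsupp.add_apply, Finsupp.smul_apply, smul_eq_mul, cMono_apply]
      refine ⟨m i + 1, ?_⟩
      have hmul : p * (m i + 1) = p * m i + p := by ring
      omega
  refine ⟨hmain, ?_, ?_, ?_⟩
  · intro a b
    rw [mul_add]
    exact trMap_add p K hp0 _ _
  · intro a b
    have hcomm : g ^ (p - 1) * (a ^ p * b) = a ^ p * (g ^ (p - 1) * b) := by ring
    rw [hcomm]
    exact trMap_pow_mul p K hp0 hp _ _
  · rw [mul_one]
    exact hmain
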